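/- Let F ⊂ R^n (n ≥ 2) be compact convex with 0 ∈ int F, ξ ∈ ∂F, and suppose there exist δ > 0 and f : R^n → R of class C² on ξ + δB with F ⊆ {x : f(x) ≤ 0}, ⟨ξ, ∇f(ξ)⟩ > 0, and for x ∈ ξ + δB, x ∈ ∂F iff f(x) = 0. Then for any η ∈ ∂F ∩ (ξ + δ'B) (δ' small enough that ⟨y, ∇f(y)⟩ > 0 on ξ + δ'B), the normal cone N_F(η) equals the ray {λ∇f(η) : λ ≥ 0}. -/

import Mathlib

open RealInnerProductSpace Filter Metric Topology

noncomputable section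

abbrev Euc (n : ℕ) := EuclideanSpace ℝ (Fin n)

/-- The polar set `F°`. -/
def polarSet {n : ℕ} (F : Set (Euc n)) : Set (Euc n) := {y | ∀ x ∈ F, ⟪x, y⟫ ≤ 1}

/-- The normal cone of convex analysis to `F` at `ξ`. -/
def normalCone {n : ℕ} (F : Set (Euc n)) (ξ : Euc n) : Set (Euc n) :=
  {ζ | ∀ y ∈ F, ⟪y - ξ, ζ⟫ ≤ 0}

/-- The tangent hyperplane to `F` at `ξ`. -/
def tangentHyp {n : ℕ} (F : Set (Euc n)) (ξ : Euc n) : Set (Euc n) :=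
  {v | ∀ ζ ∈ normalCone F ξ, ⟪v, ζ⟫ = 0}

/-- The 2-dimensional plane `P(η, u) = span{∇f(η), u} + η`. -/
def planeP {n : ℕ} (f : Euc n → ℝ) (η u : Euc n) : Set (Euc n) :=
  {y | ∃ a b : ℝ, y = η + a • gradient f η + b • u}

/-- `η* = ∇f(η)/⟨η, ∇f(η)⟩`, the unique element of `N_F(η) ∩ ∂F°`. -/
def etaStar {n : ℕ} (f : Euc n → ℝ) (η : Euc n) : Euc n :=
  (⟪η, gradient f η⟫)⁻¹ • gradient f η

/-- The 2-dimensional modulus of strict convexity `Ĉ_F(r, η, u)`. -/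
def Chat {n : ℕ} (F : Set (Euc n)) (f : Euc n → ℝ) (r : ℝ) (η u : Euc n) : ℝ :=
  sInf {t | ∃ y, y ∈ F ∧ y ∈ planeP f η u ∧ r ≤ ‖η - y‖ ∧ t = ⟪η - y, etaStar f η⟫}

/-- The tangent vector at `η` corresponding to a tangent vector `u` at `ξ`: the
coordinates `j ≠ i` agree with those of `u` and the `i`-th coordinate is determined
by tangency at `η`.  For `u = e_j` this is the tangent basis vector `u^j(η)`. -/
def uAt {n : ℕ} (f : Euc n → ℝ) (i : Fin n) (u : Euc n) (η : Euc n) : Euc n :=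
  ∑ j ∈ Finset.univ.erase i,
    u j • (EuclideanSpace.single j (1:ℝ) -
      (gradient f η j / gradient f η i) • EuclideanSpace.single i (1:ℝ))

/-- The directional lower curvature `γ̂_F(ξ, u(ξ))`, a liminf of the directional modulus
of strict convexity over `r²` as `(r, η) → (0⁺, ξ)`, `η ∈ ∂F`. -/
def gammaDir {n : ℕ} (F : Set (Euc n)) (f : Euc n → ℝ) (i : Fin n) (ξ u : Euc n) : ℝ :=
  Filter.liminf (fun p : ℝ × Euc n => Chat F f p.1 p.2 (uAt f i u p.2) / p.1 ^ 2)
    ((𝓝[>] (0:ℝ)) ×ˢ (𝓝 ξ ⊓ 𝓟 (frontier F)))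

/-- The Hessian bilinear form `⟨∇²f(ξ)u, v⟩`. -/
def hessQ {n : ℕ} (f : Euc n → ℝ) (ξ u v : Euc n) : ℝ := ⟪fderiv ℝ (gradient f) ξ u, v⟫


private lemma inner_grad {n : ℕ} (f : Euc n → ℝ) (x v : Euc n) :
    ⟪gradient f x, v⟫ = fderiv ℝ f x v :=
  InnerProductSpace.toDual_symm_apply

set_option maxHeartbeats 2000000 in
/-- Under the standing C² hypotheses, for every boundary point `η` near `ξ` the normal
cone to `F` at `η` is the ray generated by `∇f(η)`. -/
theorem normalCone_eq_ray_gradient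
    {n : ℕ} (hn : 2 ≤ n) (F : Set (Euc n)) (hF : IsCompact F) (hFc : Convex ℝ F)
    (h0 : (0 : Euc n) ∈ interior F) (ξ : Euc n) (hξ : ξ ∈ frontier F)
    (f : Euc n → ℝ) (δ : ℝ) (hδ : 0 < δ) (hf : ContDiffOn ℝ 2 f (Metric.ball ξ δ))
    (hFf : F ⊆ {x | f x ≤ 0}) (hgr : 0 < ⟪ξ, gradient f ξ⟫)
    (hbd : ∀ x ∈ Metric.ball ξ δ, (x ∈ frontier F ↔ f x = 0))
    (δ' : ℝ) (hδ'pos : 0 < δ') (hδ'le : δ' ≤ δ)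
    (hδ' : ∀ y ∈ Metric.ball ξ δ', 0 < ⟪y, gradient f y⟫) :
    ∀ η ∈ frontier F ∩ Metric.ball ξ δ',
      normalCone F η = {ζ | ∃ l : ℝ, 0 ≤ l ∧ ζ = l • gradient f η} := by
  have main : ∀ η ∈ frontier F ∩ Metric.ball ξ δ', ∀ ζ : Euc n,
      ζ ∈ normalCone F η ↔ ζ ∈ {ζ | ∃ l : ℝ, 0 ≤ l ∧ ζ = l • gradient f η} := by
      rintro η ⟨hηF, hηb'⟩
      have hηb : η ∈ Metric.ball ξ δ := Metric.ball_subset_ball hδ'le hηb'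
      have hηF' : η ∈ F := hF.isClosed.frontier_subset hηF
      have hfη : f η = 0 := (hbd η hηb).mp hηF
      set g := gradient f η with hg
      have hηg : 0 < ⟪η, g⟫ := hδ' η hηb'
      have hmemnhds : Metric.ball ξ δ ∈ 𝓝 η := Metric.isOpen_ball.mem_nhds hηb
      have hcd : ContDiffAt ℝ 2 f η := hf.contDiffAt hmemnhds
      have hsd : HasStrictFDerivAt f (fderiv ℝ f η) η := hcd.hasStrictFDerivAt (by norm_num)
      set f' := fderiv ℝ f η with hf'def
      have hfg : ∀ v, f' v = ⟪g, v⟫ := fun v => (inner_grad f η v).symm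
      have hgne : g ≠ 0 := by
        intro h
        rw [h, inner_zero_right] at hηg
        exact lt_irrefl _ hηg
      have hgg : (0:ℝ) < ⟪g, g⟫ :=
        lt_of_le_of_ne real_inner_self_nonneg (Ne.symm (inner_self_ne_zero.mpr hgne))
      have hrange : LinearMap.range (f' : Euc n →ₗ[ℝ] ℝ) = ⊤ := by
        rw [LinearMap.range_eq_top]
        intro c
        refine ⟨(c / ⟪g, g⟫) • g, ?_⟩
        rw [map_smul, ContinuousLinearMap.coe_coe, hfg, smul_eq_mul, div_mul_cancel₀ _ (ne_of_gt hgg)]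
      -- the gradient is an outer normal direction
      have hgnormal : ∀ y ∈ F, ⟪y - η, g⟫ ≤ 0 := by
        intro y hy
        have hφ : HasDerivAt (fun t : ℝ => f (η + t • (y - η))) (f' (y - η)) 0 := by
          have h1 : HasDerivAt (fun t : ℝ => η + t • (y - η)) (y - η) 0 := by
            simpa using ((hasDerivAt_id (0:ℝ)).smul_const (y - η)).const_add η
          have h2 : HasFDerivAt f f' (η + (0:ℝ) • (y - η)) := by
            rw [zero_smul, add_zero]; exact hsd.hasFDerivAt
          exact h2.comp_hasDerivAt 0 h1
        have hval : ∀ t ∈ Set.Ioc (0:ℝ) 1, f (η + t • (y - η)) ≤ 0 := by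
          intro t ht
          have hmem : η + t • (y - η) ∈ F := by
            have := hFc hηF' hy (by linarith [ht.1, ht.2] : (0:ℝ) ≤ 1 - t) (le_of_lt ht.1)
              (by ring)
            convert this using 1
            module
          exact hFf hmem
        have hd : f' (y - η) ≤ 0 := by
          have hslope := hasDerivWithinAt_iff_tendsto_slope.mp
            (hφ.hasDerivWithinAt (s := Set.Ioi (0:ℝ)))
          have hdiff : Set.Ioi (0:ℝ) \ {0} = Set.Ioi 0 := by simp
          rw [hdiff] at hslope
          refine le_of_tendsto hslope ?_
          filter_upwards [Ioc_mem_nhdsGT_of_mem (Set.mem_Ico.mpr ⟨le_refl 0, zero_lt_one⟩),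
            self_mem_nhdsWithin] with t ht ht'
          have ht0 : (0:ℝ) < t := ht'
          have : slope (fun t : ℝ => f (η + t • (y - η))) 0 t
              = f (η + t • (y - η)) / t := by
            simp [slope_def_field, hfη]
          rw [this]
          exact div_nonpos_of_nonpos_of_nonneg (hval t ht) (le_of_lt ht0)
        calc ⟪y - η, g⟫ = ⟪g, y - η⟫ := real_inner_comm _ _
          _ = f' (y - η) := (hfg _).symm
          _ ≤ 0 := hd
      -- tangent directions kill normal vectors
      have key : ∀ ζ ∈ normalCone F η, ∀ v : Euc n, ⟪g, v⟫ = 0 → ⟪ζ, v⟫ = 0 := by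
        intro ζ hζ v hv
        have hvker : v ∈ LinearMap.ker (f' : Euc n →ₗ[ℝ] ℝ) := by
          rw [LinearMap.mem_ker, ContinuousLinearMap.coe_coe, hfg]; exact hv
        set ψ := hsd.implicitFunction f f' hrange (f η) with hψdef
        have hψ0 : ψ 0 = η := hsd.implicitFunction_apply_image hrange
        have hψd : HasStrictFDerivAt ψ (LinearMap.ker (f' : Euc n →ₗ[ℝ] ℝ)).subtypeL 0 :=
          hsd.to_implicitFunction hrange
        set vv : LinearMap.ker (f' : Euc n →ₗ[ℝ] ℝ) := ⟨v, hvker⟩ with hvv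
        have h1 : HasDerivAt (fun t : ℝ => t • vv) vv 0 := by
          simpa using (hasDerivAt_id (0:ℝ)).smul_const vv
        have hψd0 : HasFDerivAt ψ (LinearMap.ker (f' : Euc n →ₗ[ℝ] ℝ)).subtypeL ((0:ℝ) • vv) := by
          rw [zero_smul]; exact hψd.hasFDerivAt
        have hcurve : HasDerivAt (fun t : ℝ => ψ (t • vv)) v 0 := by
          exact hψd0.comp_hasDerivAt 0 h1
        have hev1 : ∀ᶠ t : ℝ in 𝓝 0, f (ψ (t • vv)) = 0 := by
          have hmm := hsd.map_implicitFunction_eq hrange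
          have htend : Filter.Tendsto (fun t : ℝ => ((f η : ℝ), t • vv)) (𝓝 0)
              (𝓝 (f η, (0 : LinearMap.ker (f' : Euc n →ₗ[ℝ] ℝ)))) := by
            rw [nhds_prod_eq]
            refine Filter.Tendsto.prodMk tendsto_const_nhds ?_
            have := h1.continuousAt
            simpa [ContinuousAt, zero_smul] using this
          filter_upwards [htend.eventually hmm] with t h
          exact h.trans hfη
        have hev2 : ∀ᶠ t : ℝ in 𝓝 0, ψ (t • vv) ∈ Metric.ball ξ δ := by
          have hc : ContinuousAt (fun t : ℝ => ψ (t • vv)) 0 := hcurve.continuousAt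
          have heq : (fun t : ℝ => ψ (t • vv)) 0 = η := by
            show ψ ((0:ℝ) • vv) = η
            rw [zero_smul, hψ0]
          exact hc.eventually_mem (by rw [zero_smul, hψ0]; exact hmemnhds)
        have hmax : IsLocalMax (fun t : ℝ => ⟪ζ, ψ (t • vv) - η⟫) 0 := by
          filter_upwards [hev1, hev2] with t hf0 hball
          have hfr : ψ (t • vv) ∈ frontier F := (hbd _ hball).mpr hf0
          have hmemF : ψ (t • vv) ∈ F := hF.isClosed.frontier_subset hfr
          have := hζ _ hmemF
          calc ⟪ζ, ψ (t • vv) - η⟫ = ⟪ψ (t • vv) - η, ζ⟫ := real_inner_comm _ _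
            _ ≤ 0 := this
            _ = ⟪ζ, ψ ((0:ℝ) • vv) - η⟫ := by rw [zero_smul, hψ0, sub_self, inner_zero_right]
        have hφd : HasDerivAt (fun t : ℝ => ⟪ζ, ψ (t • vv) - η⟫) ⟪ζ, v⟫ 0 := by
          have h2 : HasDerivAt (fun t : ℝ => ψ (t • vv) - η) v 0 := hcurve.sub_const η
          exact (innerSL ℝ ζ).hasFDerivAt.comp_hasDerivAt 0 h2
        exact hmax.hasDerivAt_eq_zero hφd
      intro ζ
      simp only [normalCone, Set.mem_setOf_eq]
      constructor
      · intro hζ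
        set c := ⟪g, ζ⟫ / ⟪g, g⟫ with hc
        have hw : ⟪g, ζ - c • g⟫ = 0 := by
          rw [inner_sub_right, real_inner_smul_right, hc, div_mul_cancel₀ _ (ne_of_gt hgg),
            sub_self]
        have h0' : ⟪ζ, ζ - c • g⟫ = 0 := key ζ hζ _ hw
        have hwzero : ζ - c • g = 0 := by
          have h1 : ⟪ζ - c • g, ζ - c • g⟫ = 0 := by
            rw [inner_sub_left, h0', real_inner_smul_left, hw]
            ring
          exact inner_self_eq_zero.mp h1
        have hζ' : ζ = c • g := by rwa [sub_eq_zero] at hwzero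
        refine ⟨c, ?_, hζ'⟩
        have h0F : (0 : Euc n) ∈ F := interior_subset h0
        have hle := hζ 0 h0F
        rw [zero_sub, inner_neg_left] at hle
        have hηζ : 0 ≤ ⟪η, ζ⟫ := by linarith
        rw [hζ', real_inner_smul_right] at hηζ
        nlinarith
      · rintro ⟨l, hl, rfl⟩ y hy
        rw [real_inner_smul_right]
        exact mul_nonpos_of_nonneg_of_nonpos hl (hgnormal y hy)
  intro η hη
  exact Set.ext (main η hη)
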